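/- There exists a polynomial in ℝ[x] that is nonnegative on all of ℝⁿ but is not a sum of squares of polynomials (e.g., the Motzkin polynomial x₁⁴x₂² + x₁²x₂⁴ − 3x₁²x₂² + 1 in two variables). -/

import Mathlib

open MvPolynomial Polynomial

/-- Sum of squares of reals zero implies each zero. -/
private lemma hzReal {k : ℕ} (c : Fin k → ℝ) (h : ∑ i, c i ^ 2 = 0) : ∀ i, c i = 0 := by
  intro i
  have := (Finset.sum_eq_zero_iff_of_nonneg (fun j _ => sq_nonneg (c j))).1 h i (Finset.mem_univ i)
  exact pow_eq_zero_iff (n := 2) (by norm_num) |>.1 this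

/-- Sum of squares of real polynomials zero implies each zero. -/
private lemma hzPoly {k : ℕ} (c : Fin k → Polynomial ℝ) (h : ∑ i, c i ^ 2 = 0) : ∀ i, c i = 0 := by
  intro i
  apply Polynomial.funext
  intro r
  have h1 : ∑ j, (c j).eval r ^ 2 = 0 := by
    have := congrArg (Polynomial.eval r) h
    simpa [Polynomial.eval_finset_sum] using this
  simpa using hzReal _ h1 i

private lemma coeff_sq_top {B : Type} [CommRing B] (p : Polynomial B) {D : ℕ}
    (h : p.natDegree ≤ D) : (p ^ 2).coeff (D + D) = p.coeff D ^ 2 := by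
  rw [sq, sq, Polynomial.coeff_mul]
  rw [Finset.sum_eq_single_of_mem (D, D) (Finset.HasAntidiagonal.mem_antidiagonal.2 rfl) ?_]
  · rintro ⟨a, b⟩ hab hne
    rw [Finset.HasAntidiagonal.mem_antidiagonal] at hab
    rcases lt_or_ge D a with h1 | h1
    · rw [Polynomial.coeff_eq_zero_of_natDegree_lt (lt_of_le_of_lt h h1), zero_mul]
    · have hb : D < b := by
        rcases lt_or_eq_of_le h1 with h2 | h2
        · omega
        · exfalso; apply hne; simp at hab ⊢; omega
      rw [Polynomial.coeff_eq_zero_of_natDegree_lt (lt_of_le_of_lt h hb), mul_zero]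

private lemma sos_natDegree_le {B : Type} [CommRing B]
    (hz : ∀ (k : ℕ) (c : Fin k → B), ∑ i, c i ^ 2 = 0 → ∀ i, c i = 0)
    {k : ℕ} (p : Fin k → Polynomial B) {f : Polynomial B}
    (hf : ∑ i, p i ^ 2 = f) {d : ℕ} (hd : f.natDegree ≤ 2 * d) :
    ∀ i, (p i).natDegree ≤ d := by
  by_contra hcon
  push_neg at hcon
  obtain ⟨j, hj⟩ := hcon
  set D := Finset.univ.sup (fun i => (p i).natDegree) with hD
  have hjD : d < D :=
    lt_of_lt_of_le hj (Finset.le_sup (f := fun i => (p i).natDegree) (Finset.mem_univ j))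
  have hDle : ∀ i, (p i).natDegree ≤ D :=
    fun i => Finset.le_sup (f := fun i => (p i).natDegree) (Finset.mem_univ i)
  obtain ⟨i₀, _, hi₀⟩ := Finset.exists_mem_eq_sup Finset.univ ⟨j, Finset.mem_univ j⟩
      (fun i => (p i).natDegree)
  have hcoeff : ∑ i, (p i).coeff D ^ 2 = 0 := by
    have h1 : (∑ i, p i ^ 2).coeff (D + D) = ∑ i, (p i).coeff D ^ 2 := by
      rw [Polynomial.finset_sum_coeff]
      exact Finset.sum_congr rfl (fun i _ => coeff_sq_top _ (hDle i))
    have h2 : f.coeff (D + D) = 0 :=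
      Polynomial.coeff_eq_zero_of_natDegree_lt (by omega)
    rw [← h1, hf, h2]
  have hz0 := hz _ _ hcoeff i₀
  have hlc : (p i₀).leadingCoeff = 0 := by rwa [Polynomial.leadingCoeff, ← hi₀]
  have hp0 : p i₀ = 0 := Polynomial.leadingCoeff_eq_zero.mp hlc
  rw [hp0] at hi₀
  simp only [Polynomial.natDegree_zero] at hi₀
  rw [← hD] at hi₀
  omega

private lemma coeff2_mul {B : Type} [CommRing B] (p q : Polynomial B) :
    (p * q).coeff 2 = p.coeff 0 * q.coeff 2 + p.coeff 1 * q.coeff 1 + p.coeff 2 * q.coeff 0 := by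
  rw [Polynomial.coeff_mul, Finset.Nat.sum_antidiagonal_eq_sum_range_succ_mk]
  rw [Finset.sum_range_succ, Finset.sum_range_succ, Finset.sum_range_succ, Finset.sum_range_zero]
  norm_num

/-- The isomorphism `ℝ[x₀,x₁] ≃ (ℝ[Y])[X]`. -/
noncomputable def e2 : MvPolynomial (Fin 2) ℝ ≃+* Polynomial (Polynomial ℝ) :=
  (MvPolynomial.finSuccEquiv ℝ 1).toRingEquiv.trans
    (Polynomial.mapEquiv
      ((MvPolynomial.finSuccEquiv ℝ 0).toRingEquiv.trans
        (Polynomial.mapEquiv (MvPolynomial.isEmptyRingEquiv ℝ (Fin 0)))))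

private lemma e2_X0 : e2 (MvPolynomial.X 0) = Polynomial.X := by
  simp [e2, MvPolynomial.finSuccEquiv_X_zero]

private lemma e2_X1 : e2 (MvPolynomial.X 1) = Polynomial.C Polynomial.X := by
  have h1 : (MvPolynomial.X 1 : MvPolynomial (Fin 2) ℝ) = MvPolynomial.X (Fin.succ 0) := rfl
  simp [e2, h1, MvPolynomial.finSuccEquiv_X_succ, MvPolynomial.finSuccEquiv_X_zero]

/-- The Motzkin polynomial. -/
noncomputable def Mz : MvPolynomial (Fin 2) ℝ :=
  X 0 ^ 4 * X 1 ^ 2 + X 0 ^ 2 * X 1 ^ 4 - 3 * (X 0 ^ 2 * X 1 ^ 2) + 1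

/-- The image of the Motzkin polynomial in `(ℝ[Y])[X]`. -/
noncomputable def N2 : Polynomial (Polynomial ℝ) :=
  Polynomial.C (Polynomial.X ^ 2) * Polynomial.X ^ 4 +
    Polynomial.C (Polynomial.X ^ 4 - 3 * Polynomial.X ^ 2) * Polynomial.X ^ 2 + 1

private lemma e2_Mz : e2 Mz = N2 := by
  have h3 : e2 3 = 3 := map_ofNat e2 3
  simp only [Mz, N2, map_add, map_sub, map_mul, map_pow, map_one, e2_X0, e2_X1, h3]
  push_cast [map_pow, map_sub, map_mul, map_ofNat]
  ring

private lemma N2_coeff0 : N2.coeff 0 = 1 := by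
  simp only [N2, Polynomial.coeff_add, Polynomial.coeff_C_mul, Polynomial.coeff_X_pow,
    Polynomial.coeff_one]
  norm_num

private lemma N2_coeff2 : N2.coeff 2 = Polynomial.X ^ 4 - 3 * Polynomial.X ^ 2 := by
  simp only [N2, Polynomial.coeff_add, Polynomial.coeff_C_mul, Polynomial.coeff_X_pow,
    Polynomial.coeff_one]
  norm_num

private lemma N2_coeff4 : N2.coeff 4 = Polynomial.X ^ 2 := by
  simp only [N2, Polynomial.coeff_add, Polynomial.coeff_C_mul, Polynomial.coeff_X_pow,
    Polynomial.coeff_one]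
  norm_num

private lemma N2_natDegree : N2.natDegree ≤ 4 := by
  unfold N2
  compute_degree

/-- `f` is a sum of squares of polynomials. -/
def IsSOS {n : ℕ} (f : MvPolynomial (Fin n) ℝ) : Prop :=
  ∃ (k : ℕ) (s : Fin k → MvPolynomial (Fin n) ℝ), f = ∑ i, (s i) ^ 2

private lemma Mz_not_SOS : ¬ IsSOS Mz := by
  rintro ⟨k, s, hs⟩
  set P : Fin k → Polynomial (Polynomial ℝ) := fun i => e2 (s i) with hP
  have hN : ∑ i, P i ^ 2 = N2 := by
    rw [← e2_Mz, hs, map_sum]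
    exact Finset.sum_congr rfl (fun i _ => (map_pow e2 (s i) 2).symm)
  -- degree bound in X
  have hdegP : ∀ i, (P i).natDegree ≤ 2 :=
    sos_natDegree_le (fun _ c h => hzPoly c h) P hN (by rw [show 2 * 2 = 4 from rfl]; exact N2_natDegree)
  set p0 : Fin k → Polynomial ℝ := fun i => (P i).coeff 0 with hp0
  set p1 : Fin k → Polynomial ℝ := fun i => (P i).coeff 1 with hp1
  set p2 : Fin k → Polynomial ℝ := fun i => (P i).coeff 2 with hp2
  -- coefficient of X^0
  have E0 : ∑ i, p0 i ^ 2 = 1 := by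
    have h1 : (∑ i, P i ^ 2).coeff 0 = ∑ i, p0 i ^ 2 := by
      rw [Polynomial.finset_sum_coeff]
      refine Finset.sum_congr rfl (fun i _ => ?_)
      rw [sq, sq, Polynomial.mul_coeff_zero]
    rw [← h1, hN, N2_coeff0]
  have hdeg0 : ∀ i, (p0 i).natDegree ≤ 0 :=
    sos_natDegree_le (fun _ c h => hzReal c h) p0 E0 (by simp)
  -- coefficient of X^4
  have E4 : ∑ i, p2 i ^ 2 = Polynomial.X ^ 2 := by
    have h1 : (∑ i, P i ^ 2).coeff 4 = ∑ i, p2 i ^ 2 := by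
      rw [Polynomial.finset_sum_coeff]
      refine Finset.sum_congr rfl (fun i _ => ?_)
      have := coeff_sq_top (P i) (hdegP i)
      norm_num at this
      exact this
    rw [← h1, hN, N2_coeff4]
  have hdeg2 : ∀ i, (p2 i).natDegree ≤ 1 :=
    sos_natDegree_le (fun _ c h => hzReal c h) p2 E4 (by simp)
  have h20 : ∀ i, (p2 i).coeff 0 = 0 := by
    apply hzReal
    have h1 : (∑ i, p2 i ^ 2).coeff 0 = ∑ i, (p2 i).coeff 0 ^ 2 := by
      rw [Polynomial.finset_sum_coeff]
      refine Finset.sum_congr rfl (fun i _ => ?_)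
      rw [sq, sq, Polynomial.mul_coeff_zero]
    rw [← h1, E4]
    simp
  -- coefficient of X^2
  have E2 : ∑ i, (p1 i ^ 2 + 2 * (p0 i * p2 i)) = Polynomial.X ^ 4 - 3 * Polynomial.X ^ 2 := by
    have h1 : (∑ i, P i ^ 2).coeff 2 = ∑ i, (p1 i ^ 2 + 2 * (p0 i * p2 i)) := by
      rw [Polynomial.finset_sum_coeff]
      refine Finset.sum_congr rfl (fun i _ => ?_)
      rw [sq, coeff2_mul, sq]
      ring
    rw [← h1, hN, N2_coeff2]
  -- constant (Y^0) coefficient of E2 : kill the constant terms of p1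
  have hu : ∀ i, (p1 i).coeff 0 = 0 := by
    apply hzReal
    have h1 : (∑ i, (p1 i ^ 2 + 2 * (p0 i * p2 i))).coeff 0 = ∑ i, (p1 i).coeff 0 ^ 2 := by
      rw [Polynomial.finset_sum_coeff]
      refine Finset.sum_congr rfl (fun i _ => ?_)
      rw [Polynomial.coeff_add, sq, Polynomial.mul_coeff_zero, Polynomial.coeff_ofNat_mul,
        Polynomial.mul_coeff_zero, h20 i]
      ring
    rw [← h1, E2]
    simp
  -- Y^2 coefficient of E2 : the contradiction
  have hfinal : ∑ i, (p1 i).coeff 1 ^ 2 = -3 := by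
    have h1 : (∑ i, (p1 i ^ 2 + 2 * (p0 i * p2 i))).coeff 2 = ∑ i, (p1 i).coeff 1 ^ 2 := by
      rw [Polynomial.finset_sum_coeff]
      refine Finset.sum_congr rfl (fun i _ => ?_)
      rw [Polynomial.coeff_add, sq, coeff2_mul, Polynomial.coeff_ofNat_mul, coeff2_mul]
      rw [hu i, h20 i]
      rw [Polynomial.coeff_eq_zero_of_natDegree_lt (lt_of_le_of_lt (hdeg2 i) (by norm_num)),
        Polynomial.coeff_eq_zero_of_natDegree_lt (lt_of_le_of_lt (hdeg0 i) (by norm_num) :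
          (p0 i).natDegree < 1),
        Polynomial.coeff_eq_zero_of_natDegree_lt (lt_of_le_of_lt (hdeg0 i) (by norm_num) :
          (p0 i).natDegree < 2)]
      ring
    have h2 : (Polynomial.X ^ 4 - 3 * Polynomial.X ^ 2 : Polynomial ℝ).coeff 2 = -3 := by
      simp [Polynomial.coeff_X_pow]
    rw [← h1, E2, h2]
  have : (0 : ℝ) ≤ ∑ i, (p1 i).coeff 1 ^ 2 :=
    Finset.sum_nonneg (fun i _ => sq_nonneg _)
  rw [hfinal] at this
  linarith

/-- There exists a polynomial (e.g. the Motzkin polynomial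
`x₁⁴x₂² + x₁²x₂⁴ − 3x₁²x₂² + 1`) that is nonnegative on all of `ℝ²` but is not a sum
of squares of polynomials. -/
theorem stmt6 :
    ∃ p : MvPolynomial (Fin 2) ℝ,
      (∀ x : Fin 2 → ℝ, 0 ≤ MvPolynomial.eval x p) ∧ ¬ IsSOS p := by
  refine ⟨Mz, ?_, Mz_not_SOS⟩
  intro x
  simp only [Mz, map_add, map_sub, map_mul, map_pow, map_one, MvPolynomial.eval_X, map_ofNat]
  have key : ∀ a b : ℝ, 0 ≤ a → 0 ≤ b → 3*a*b ≤ a^2*b + a*b^2 + 1 := by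
    intro a b ha hb
    nlinarith [sq_nonneg (a-b), sq_nonneg (a+b-2), sq_nonneg (a*b-1), mul_nonneg ha hb,
      mul_nonneg (mul_nonneg ha hb) ha, mul_nonneg (mul_nonneg ha hb) hb,
      sq_nonneg (a-1), sq_nonneg (b-1), mul_nonneg ha (sq_nonneg (b-1)),
      mul_nonneg hb (sq_nonneg (a-1)), mul_nonneg (mul_nonneg ha hb) (sq_nonneg (a-b))]
  have := key (x 0 ^ 2) (x 1 ^ 2) (sq_nonneg _) (sq_nonneg _)
  nlinarith [this]
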